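/- Let f : ℝ^n → ℝ be twice continuously differentiable and μ-strongly convex with μ > 0, g : ℝ^n → (-∞, ∞] a proper closed convex function, ν > 0, and let x* satisfy F_ν(x*) = 0. Suppose ∂F_ν has nonempty compact images, is upper-semicontinuous at x*, and is a strong linear Newton approximation of F_ν at x*, i.e., ‖F_ν(x*) − F_ν(y) − A(x* − y)‖₂ = O(‖x* − y‖₂²) as y → x*, uniformly over A ∈ ∂F_ν(y); suppose also every element of ∂F_ν(x) is nonsingular for every x ∈ ℝ^n. Then there exist ε > 0 and C > 0 such that every sequence (x^(k)) with ‖x^(1) − x*‖₂ < ε and x^(k+1) = x^(k) − A_k^{-1} F_ν(x^(k)) for some A_k ∈ ∂F_ν(x^(k)) converges to x* quadratically: x^(k) → x* and ‖x^(k+1) − x*‖₂ ≤ C ‖x^(k) − x*‖₂² for all sufficiently large k. -/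

import Mathlib

open Filter Topology RealInnerProductSpace

/-- The B-subdifferential of a map `F : ℝ^n → ℝ^n` at `x`: the set of limits of
derivatives `∇F(x^(k))` along sequences `x^(k) → x` of differentiability points of `F`. -/
def Bsubdiff {n : ℕ} (F : EuclideanSpace ℝ (Fin n) → EuclideanSpace ℝ (Fin n))
    (x : EuclideanSpace ℝ (Fin n)) :
    Set (EuclideanSpace ℝ (Fin n) →L[ℝ] EuclideanSpace ℝ (Fin n)) :=
  {V | ∃ u : ℕ → EuclideanSpace ℝ (Fin n),
      Filter.Tendsto u Filter.atTop (nhds x) ∧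
      (∀ k, DifferentiableAt ℝ F (u k)) ∧
      Filter.Tendsto (fun k => fderiv ℝ F (u k)) Filter.atTop (nhds V)}

/-- The proximal-gradient residual `F_ν(x) = x − prox_{νg}(x − ν ∇f(x))`,
where `prox` denotes the proximal map of `νg`. -/
noncomputable def Fnu {n : ℕ} (f : EuclideanSpace ℝ (Fin n) → ℝ)
    (prox : EuclideanSpace ℝ (Fin n) → EuclideanSpace ℝ (Fin n)) (ν : ℝ)
    (x : EuclideanSpace ℝ (Fin n)) : EuclideanSpace ℝ (Fin n) :=
  x - prox (x - ν • gradient f x)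

/-- The set-valued map `∂F_ν(x) = { I − V(I − ν ∇²f(x)) : V ∈ ∂_B prox_{νg}(x − ν∇f(x)) }`. -/
noncomputable def DFnu {n : ℕ} (f : EuclideanSpace ℝ (Fin n) → ℝ)
    (prox : EuclideanSpace ℝ (Fin n) → EuclideanSpace ℝ (Fin n)) (ν : ℝ)
    (x : EuclideanSpace ℝ (Fin n)) :
    Set (EuclideanSpace ℝ (Fin n) →L[ℝ] EuclideanSpace ℝ (Fin n)) :=
  {U | ∃ V ∈ Bsubdiff prox (x - ν • gradient f x),
    U = 1 - V * (1 - ν • fderiv ℝ (gradient f) x)}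


set_option maxHeartbeats 1000000
set_option synthInstance.maxHeartbeats 400000

/-- On a compact set of bijective continuous linear maps on a Euclidean space, the
inverses are uniformly bounded: there is `M > 0` with `‖v‖ ≤ M * ‖A v‖` for all `A`
in the set and all `v`. -/
theorem aux_inv_bound {n : ℕ} (S : Set (EuclideanSpace ℝ (Fin n) →L[ℝ] EuclideanSpace ℝ (Fin n)))
    (hS : IsCompact S) (hbij : ∀ A ∈ S, Function.Bijective A) :
    ∃ M > (0:ℝ), ∀ A ∈ S, ∀ v, ‖v‖ ≤ M * ‖A v‖ := by
  have hcont : ContinuousOn (fun A => ‖Ring.inverse A‖) S := by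
    intro A hA
    have h : IsUnit A := ContinuousLinearMap.isUnit_iff_bijective.mpr (hbij A hA)
    have := NormedRing.inverse_continuousAt h.unit
    rw [h.unit_spec] at this
    exact (this.norm).continuousWithinAt
  obtain ⟨C, hC⟩ := hS.exists_bound_of_continuousOn hcont
  refine ⟨max C 1, lt_of_lt_of_le one_pos (le_max_right _ _), fun A hA v => ?_⟩
  have h : IsUnit A := ContinuousLinearMap.isUnit_iff_bijective.mpr (hbij A hA)
  have hinv : Ring.inverse A (A v) = v := by
    conv_lhs => rw [← h.unit_spec, Ring.inverse_unit, ← ContinuousLinearMap.mul_apply,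
      Units.inv_mul, ContinuousLinearMap.one_apply]
  calc ‖v‖ = ‖Ring.inverse A (A v)‖ := by rw [hinv]
    _ ≤ ‖Ring.inverse A‖ * ‖A v‖ := ContinuousLinearMap.le_opNorm _ _
    _ ≤ max C 1 * ‖A v‖ := by
        apply mul_le_mul_of_nonneg_right _ (norm_nonneg _)
        exact le_trans (le_trans (le_abs_self _)
          (by have := hC A hA; rwa [Real.norm_eq_abs] at this)) (le_max_left _ _)

/-- Theorem 3.4, quadratic case. Under the stated assumptions, with
`∂F_ν` a *strong* linear Newton approximation of `F_ν` at `x*`, the linear Newton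
iteration `A_k (x^(k+1) − x^(k)) = −F_ν(x^(k))`, `A_k ∈ ∂F_ν(x^(k))`, converges locally
quadratically to the zero `x*` of `F_ν`. -/
theorem statement15 {n : ℕ} (f : EuclideanSpace ℝ (Fin n) → ℝ) (μ : ℝ) (hμ : 0 < μ)
    (hf : ContDiff ℝ 2 f)
    (hstrong : ∀ x v : EuclideanSpace ℝ (Fin n), μ * ‖v‖ ^ 2 ≤ ⟪v, fderiv ℝ (gradient f) x v⟫)
    (g : EuclideanSpace ℝ (Fin n) → EReal)
    (hg_nebot : ∀ x, g x ≠ ⊥) (hg_proper : ∃ x, g x ≠ ⊤)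
    (hg_closed : LowerSemicontinuous g)
    (hg_conv : ∀ x y : EuclideanSpace ℝ (Fin n), ∀ a b : ℝ, 0 ≤ a → 0 ≤ b → a + b = 1 →
      g (a • x + b • y) ≤ (a : EReal) * g x + (b : EReal) * g y)
    (ν : ℝ) (hν : 0 < ν)
    (prox : EuclideanSpace ℝ (Fin n) → EuclideanSpace ℝ (Fin n))
    (hprox : ∀ w, IsMinOn
      (fun z => (ν : EReal) * g z + ((‖z - w‖ ^ 2 / 2 : ℝ) : EReal)) Set.univ (prox w))
    (xstar : EuclideanSpace ℝ (Fin n)) (hzero : Fnu f prox ν xstar = 0)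
    (hnonempty : ∀ x, (DFnu f prox ν x).Nonempty)
    (hcompact : ∀ x, IsCompact (DFnu f prox ν x))
    (husc : ∀ ε > (0 : ℝ), ∃ δ > (0 : ℝ), ∀ y : EuclideanSpace ℝ (Fin n), ‖y - xstar‖ < δ →
      ∀ U ∈ DFnu f prox ν y, ∃ U' ∈ DFnu f prox ν xstar, ‖U - U'‖ < ε)
    (hsLNA : ∃ C > (0 : ℝ), ∃ δ > (0 : ℝ), ∀ y : EuclideanSpace ℝ (Fin n), ‖y - xstar‖ < δ →
      ∀ A ∈ DFnu f prox ν y,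
        ‖Fnu f prox ν xstar - Fnu f prox ν y - A (xstar - y)‖ ≤ C * ‖xstar - y‖ ^ 2)
    (hnonsing : ∀ x : EuclideanSpace ℝ (Fin n), ∀ A ∈ DFnu f prox ν x, Function.Bijective A) :
    ∃ ε > (0 : ℝ), ∃ C > (0 : ℝ), ∀ (x : ℕ → EuclideanSpace ℝ (Fin n))
      (A : ℕ → (EuclideanSpace ℝ (Fin n) →L[ℝ] EuclideanSpace ℝ (Fin n))),
      ‖x 0 - xstar‖ < ε →
      (∀ k, A k ∈ DFnu f prox ν (x k)) →
      (∀ k, A k (x (k + 1) - x k) = -(Fnu f prox ν (x k))) →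
      Tendsto x atTop (𝓝 xstar) ∧
      ∀ᶠ k in atTop, ‖x (k + 1) - xstar‖ ≤ C * ‖x k - xstar‖ ^ 2 := by
  obtain ⟨M, hM, hMbd⟩ := aux_inv_bound (DFnu f prox ν xstar) (hcompact xstar) (hnonsing xstar)
  obtain ⟨δ₁, hδ₁, hδ₁'⟩ := husc (1/(2*M)) (by positivity)
  have hhalf : M * (1/(2*M)) = 1/2 := by field_simp
  have hlow : ∀ y, ‖y - xstar‖ < δ₁ → ∀ A ∈ DFnu f prox ν y, ∀ v,
      ‖v‖ ≤ 2*M*‖A v‖ := by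
    intro y hy A hA v
    obtain ⟨A', hA', hAA'⟩ := hδ₁' y hy A hA
    have h1 : ‖v‖ ≤ M * ‖A' v‖ := hMbd A' hA' v
    have h2 : ‖A' v‖ ≤ ‖A v‖ + ‖(A' - A) v‖ := by
      have he : A' v = A v + (A' - A) v := by simp
      rw [he]; exact norm_add_le _ _
    have h3 : ‖(A' - A) v‖ ≤ (1/(2*M)) * ‖v‖ := by
      calc ‖(A' - A) v‖ ≤ ‖A' - A‖ * ‖v‖ := ContinuousLinearMap.le_opNorm _ _
        _ ≤ (1/(2*M)) * ‖v‖ := by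
            apply mul_le_mul_of_nonneg_right _ (norm_nonneg _)
            rw [norm_sub_rev]; exact le_of_lt hAA'
    have h4 : ‖v‖ ≤ M * (‖A v‖ + (1/(2*M)) * ‖v‖) :=
      le_trans h1 (mul_le_mul_of_nonneg_left (by linarith) hM.le)
    have h5 : M * (‖A v‖ + (1/(2*M)) * ‖v‖) = M * ‖A v‖ + (M * (1/(2*M))) * ‖v‖ := by ring
    rw [h5, hhalf] at h4
    linarith
  obtain ⟨C₀, hC₀, δ₂, hδ₂, hsL⟩ := hsLNA
  set C : ℝ := 2*M*C₀ with hCdef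
  have hC : 0 < C := by positivity
  set ε : ℝ := min (min δ₁ δ₂) (1/(2*C)) with hεdef
  have hε : 0 < ε := lt_min (lt_min hδ₁ hδ₂) (by positivity)
  refine ⟨ε, hε, C, hC, fun x A hx0 hAmem hit => ?_⟩
  have key : ∀ k, ‖x k - xstar‖ < ε →
      ‖x (k+1) - xstar‖ ≤ C * ‖x k - xstar‖^2 ∧
      ‖x (k+1) - xstar‖ ≤ (1/2) * ‖x k - xstar‖ := by
    intro k hk
    have hk1 : ‖x k - xstar‖ < δ₁ :=
      lt_of_lt_of_le hk (le_trans (min_le_left _ _) (min_le_left _ _))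
    have hk2 : ‖x k - xstar‖ < δ₂ :=
      lt_of_lt_of_le hk (le_trans (min_le_left _ _) (min_le_right _ _))
    have heq : A k (x (k+1) - xstar) =
        Fnu f prox ν xstar - Fnu f prox ν (x k) - A k (xstar - x k) := by
      have e1 : x (k+1) - xstar = (x (k+1) - x k) + (x k - xstar) := by abel
      rw [e1, map_add, hit k, map_sub, map_sub, hzero]
      abel
    have hb1 : ‖A k (x (k+1) - xstar)‖ ≤ C₀ * ‖x k - xstar‖^2 := by
      rw [heq, norm_sub_rev (x k) xstar]
      exact hsL (x k) hk2 (A k) (hAmem k)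
    have hb2 : ‖x (k+1) - xstar‖ ≤ 2*M*‖A k (x (k+1) - xstar)‖ :=
      hlow (x k) hk1 (A k) (hAmem k) _
    have hb3 : ‖x (k+1) - xstar‖ ≤ C * ‖x k - xstar‖^2 := by
      calc ‖x (k+1) - xstar‖ ≤ 2*M*‖A k (x (k+1) - xstar)‖ := hb2
        _ ≤ 2*M*(C₀ * ‖x k - xstar‖^2) := by
            apply mul_le_mul_of_nonneg_left hb1 (by positivity)
        _ = C * ‖x k - xstar‖^2 := by rw [hCdef]; ring
    refine ⟨hb3, ?_⟩
    have hCε : C * ε ≤ 1/2 := by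
      have hle : ε ≤ 1/(2*C) := min_le_right _ _
      calc C * ε ≤ C * (1/(2*C)) := mul_le_mul_of_nonneg_left hle hC.le
        _ = 1/2 := by field_simp
    have hn : (0:ℝ) ≤ ‖x k - xstar‖ := norm_nonneg _
    nlinarith [hb3, hk, hn, hC.le]
  have hall : ∀ k, ‖x k - xstar‖ < ε := by
    intro k
    induction k with
    | zero => exact hx0
    | succ k ih =>
      have h1 := (key k ih).2
      have hn : (0:ℝ) ≤ ‖x k - xstar‖ := norm_nonneg _
      linarith
  have hdecay : ∀ k, ‖x k - xstar‖ ≤ (1/2)^k * ε := by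
    intro k
    induction k with
    | zero => simpa using (hall 0).le
    | succ k ih =>
      have h1 := (key k (hall k)).2
      have h2 : (1/2) * ‖x k - xstar‖ ≤ (1/2) * ((1/2)^k * ε) := by linarith
      calc ‖x (k+1) - xstar‖ ≤ (1/2) * ((1/2)^k * ε) := le_trans h1 h2
        _ = (1/2)^(k+1) * ε := by rw [pow_succ]; ring
  have htend0 : Tendsto (fun k => ‖x k - xstar‖) atTop (𝓝 0) := by
    refine squeeze_zero (fun k => norm_nonneg _) hdecay ?_
    have h := (tendsto_pow_atTop_nhds_zero_of_lt_one (by norm_num : (0:ℝ) ≤ 1/2)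
      (by norm_num : (1:ℝ)/2 < 1)).mul_const ε
    simpa using h
  exact ⟨tendsto_iff_norm_sub_tendsto_zero.mpr htend0,
    Eventually.of_forall fun k => (key k (hall k)).1⟩
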